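/- Let K be a compact Hausdorff space such that the essentially constant functions are dense in C(K). Then for every nonzero band B of C(K) there exists a nonzero essentially constant function f ∈ B. -/
import Mathlib


/-- Disjointness in a vector lattice. -/
def disjt {X : Type*} [Lattice X] [AddCommGroup X] (x y : X) : Prop := |x| ⊓ |y| = 0

/-- Disjoint complement of a set. -/
def dComp {X : Type*} [Lattice X] [AddCommGroup X] (S : Set X) : Set X :=
  {x | ∀ y ∈ S, disjt x y}

/-- A band (in an Archimedean vector lattice) is a disjoint complement. -/
def IsBand {X : Type*} [Lattice X] [AddCommGroup X] (B : Set X) : Prop :=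
  ∃ S : Set X, B = dComp S

/-- A projection band. -/
def IsProjBand {X : Type*} [Lattice X] [AddCommGroup X] (B : Set X) : Prop :=
  IsBand B ∧ ∀ x : X, ∃ b ∈ B, ∃ c ∈ dComp B, x = b + c

/-- `P` is the band-projection onto the projection band `B`. -/
def IsBandProjOnto {X : Type*} [Lattice X] [AddCommGroup X] [Module ℝ X]
    (B : Set X) (P : X →ₗ[ℝ] X) : Prop :=
  IsProjBand B ∧ ∀ x : X, P x ∈ B ∧ x - P x ∈ dComp B

/-- `P` is a band-projection. -/
def IsBandProj {X : Type*} [Lattice X] [AddCommGroup X] [Module ℝ X]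
    (P : X →ₗ[ℝ] X) : Prop := ∃ B : Set X, IsBandProjOnto B P

/-- A band preserving operator. -/
def BandPreserving {X : Type*} [Lattice X] [AddCommGroup X] [Module ℝ X]
    (T : X →ₗ[ℝ] X) : Prop := ∀ x y : X, disjt x y → disjt (T x) y

/-- A cofinal family of projection bands. -/
def CofinalProjBands (X : Type*) [Lattice X] [AddCommGroup X] : Prop :=
  ∀ B : Set X, IsBand B → B ≠ {0} →
    ∃ B' : Set X, IsProjBand B' ∧ B' ≠ {0} ∧ B' ⊆ B

/-- d-independence of a family (band-free sense). -/
def dIndepFam {X : Type*} [Lattice X] [AddCommGroup X] [Module ℝ X]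
    {ι : Type*} (f : ι → X) : Prop :=
  ∀ B : Set X, IsBand B → ∀ (t : Finset ι) (c : ι → ℝ),
    (∀ j ∈ t, c j ≠ 0) → (∑ j ∈ t, c j • f j) ∈ dComp B → ∀ j ∈ t, f j ∈ dComp B

/-- d-independence of a set (band-free sense). -/
def dIndepSet {X : Type*} [Lattice X] [AddCommGroup X] [Module ℝ X]
    (s : Set X) : Prop := dIndepFam (fun x : s => (x : X))

/-- A full system of pairwise disjoint bands. -/
def FullDisjBands {X : Type*} [Lattice X] [AddCommGroup X] (𝒞 : Set (Set X)) : Prop :=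
  (∀ B ∈ 𝒞, IsBand B) ∧
  (∀ B ∈ 𝒞, ∀ B' ∈ 𝒞, B ≠ B' → ∀ a ∈ B, ∀ b ∈ B', disjt a b) ∧
  (∀ z : X, (∀ B ∈ 𝒞, z ∈ dComp B) → z = 0)

/-- A d-basis (band-free sense). -/
def IsDBasis {X : Type*} [Lattice X] [AddCommGroup X] [Module ℝ X]
    (s : Set X) : Prop :=
  dIndepSet s ∧ ∀ x : X, ∃ 𝒞 : Set (Set X), FullDisjBands 𝒞 ∧
    ∀ B ∈ 𝒞, ∃ (t : Finset X) (c : X → ℝ), (↑t ⊆ s) ∧ (∀ e ∈ t, c e ≠ 0) ∧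
      (x - ∑ e ∈ t, c e • e) ∈ dComp B

/-- `b` is a semi-component of `x`. -/
def IsSemiComponent {X : Type*} [Lattice X] [AddCommGroup X] [Module ℝ X]
    (x b : X) : Prop :=
  b ≠ 0 ∧ ∃ (𝒞 : Set (Set X)) (c : Set X → ℝ), FullDisjBands 𝒞 ∧
    ∀ B ∈ 𝒞, (b - c B • x) ∈ dComp B

/-- Condition (*): every band has a semi-component of every element not disjoint from it. -/
def CondStar (X : Type*) [Lattice X] [AddCommGroup X] [Module ℝ X] : Prop :=
  ∀ B : Set X, IsBand B → ∀ x : X, x ∉ dComp B → ∃ b ∈ B, IsSemiComponent x b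
/-- Projection-band-sense d-independence of a family. -/
def dIndepProjFam {X : Type*} [Lattice X] [AddCommGroup X] [Module ℝ X]
    {ι : Type*} (f : ι → X) : Prop :=
  ∀ (B : Set X) (P : X →ₗ[ℝ] X), IsBandProjOnto B P →
    ∀ (t : Finset ι) (c : ι → ℝ), (∑ j ∈ t, c j • P (f j)) = 0 →
      ∀ j ∈ t, P (f j) ≠ 0 → c j = 0

/-- Projection-band-sense d-independence of a set. -/
def dIndepProjSet {X : Type*} [Lattice X] [AddCommGroup X] [Module ℝ X]
    (s : Set X) : Prop := dIndepProjFam (fun x : s => (x : X))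

/-- Lateral completeness. -/
def LatComplete (X : Type*) [Lattice X] [AddCommGroup X] : Prop :=
  ∀ S : Set X, (∀ x ∈ S, 0 ≤ x) → S.Pairwise disjt → ∃ b : X, IsLUB S b

/-- Lateral completeness of a subset (sups taken relative to the subset). -/
def LatCompleteIn {X : Type*} [Lattice X] [AddCommGroup X] (X₀ : Set X) : Prop :=
  ∀ S : Set X, S ⊆ X₀ → (∀ x ∈ S, 0 ≤ x) → S.Pairwise disjt →
    ∃ b ∈ X₀, b ∈ upperBounds S ∧ ∀ b' ∈ X₀, b' ∈ upperBounds S → b ≤ b'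

/-- Dedekind completeness of a subset (sups relative to the subset). -/
def DedekindCompleteIn {X : Type*} [Lattice X] [AddCommGroup X] (X₀ : Set X) : Prop :=
  ∀ S : Set X, S ⊆ X₀ → S.Nonempty → (∃ u ∈ X₀, u ∈ upperBounds S) →
    ∃ b ∈ X₀, b ∈ upperBounds S ∧ ∀ b' ∈ X₀, b' ∈ upperBounds S → b ≤ b'

/-- Universal completeness of a subset. -/
def UnivCompleteIn {X : Type*} [Lattice X] [AddCommGroup X] (X₀ : Set X) : Prop :=
  LatCompleteIn X₀ ∧ DedekindCompleteIn X₀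

/-- Disjoint complement of `S` relative to the sublattice `X₀`. -/
def dCompIn {X : Type*} [Lattice X] [AddCommGroup X] (X₀ S : Set X) : Set X :=
  {x | x ∈ X₀ ∧ ∀ y ∈ S, disjt x y}

/-- Bands of the sublattice `X₀`. -/
def IsBandIn {X : Type*} [Lattice X] [AddCommGroup X] (X₀ B : Set X) : Prop :=
  ∃ S : Set X, S ⊆ X₀ ∧ B = dCompIn X₀ S

/-- Projection bands of the sublattice `X₀`. -/
def IsProjBandIn {X : Type*} [Lattice X] [AddCommGroup X] (X₀ B : Set X) : Prop :=
  IsBandIn X₀ B ∧ ∀ x ∈ X₀, ∃ b ∈ B, ∃ c ∈ dCompIn X₀ B, x = b + c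

/-- A band `B` is principally universally complete if each of its principal bands
is universally complete. -/
def PrincUnivCompleteIn {X : Type*} [Lattice X] [AddCommGroup X] (B : Set X) : Prop :=
  ∀ u ∈ B, UnivCompleteIn (dCompIn B (dCompIn B {u}))

/-- d-independence of a family relative to the sublattice `X₀`. -/
def dIndepFamIn {X : Type*} [Lattice X] [AddCommGroup X] [Module ℝ X]
    (X₀ : Set X) {ι : Type*} (f : ι → X) : Prop :=
  ∀ B : Set X, IsBandIn X₀ B → ∀ (t : Finset ι) (c : ι → ℝ),
    (∀ j ∈ t, c j ≠ 0) → (∑ j ∈ t, c j • f j) ∈ dCompIn X₀ B →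
      ∀ j ∈ t, f j ∈ dCompIn X₀ B

/-- A full system of pairwise disjoint bands of the sublattice `X₀`. -/
def FullDisjBandsIn {X : Type*} [Lattice X] [AddCommGroup X]
    (X₀ : Set X) (𝒞 : Set (Set X)) : Prop :=
  (∀ B ∈ 𝒞, IsBandIn X₀ B) ∧
  (∀ B ∈ 𝒞, ∀ B' ∈ 𝒞, B ≠ B' → ∀ a ∈ B, ∀ b ∈ B', disjt a b) ∧
  (∀ z ∈ X₀, (∀ B ∈ 𝒞, z ∈ dCompIn X₀ B) → z = 0)

/-- A d-basis of the sublattice `X₀`. -/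
def IsDBasisIn {X : Type*} [Lattice X] [AddCommGroup X] [Module ℝ X]
    (X₀ : Set X) (s : Set X) : Prop :=
  dIndepFamIn X₀ (fun x : s => (x : X)) ∧
  ∀ x ∈ X₀, ∃ 𝒞 : Set (Set X), FullDisjBandsIn X₀ 𝒞 ∧
    ∀ B ∈ 𝒞, ∃ (t : Finset X) (c : X → ℝ), (↑t ⊆ s) ∧ (∀ e ∈ t, c e ≠ 0) ∧
      (x - ∑ e ∈ t, c e • e) ∈ dCompIn X₀ B

/-- An essentially constant continuous function. -/
def EssConst {K : Type*} [TopologicalSpace K] (f : C(K, ℝ)) : Prop :=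
  ∀ G : Set K, IsOpen G → G.Nonempty →
    ∃ G₁ ⊆ G, IsOpen G₁ ∧ G₁.Nonempty ∧ ∃ c : ℝ, ∀ t ∈ G₁, f t = c


/-- If the essentially constant functions are dense in `C(K)`, then
every nonzero band of `C(K)` contains a nonzero essentially constant function. -/
theorem nonzero_band_contains_essConst
    {K : Type*} [TopologicalSpace K] [CompactSpace K] [T2Space K]
    (hdense : Dense {f : C(K, ℝ) | EssConst f}) :
    ∀ B : Set C(K, ℝ), IsBand B → B ≠ {0} →
      ∃ f ∈ B, f ≠ 0 ∧ EssConst f := by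
  intro B hB hBne
  obtain ⟨S, rfl⟩ := hB
  have h0 : (0 : C(K, ℝ)) ∈ dComp S := by
    intro y hy; simp [disjt]
  have hex : ∃ g ∈ dComp S, g ≠ 0 := by
    by_contra h
    push_neg at h
    apply hBne
    ext x
    simp only [Set.mem_singleton_iff]
    constructor
    · intro hx; exact h x hx
    · rintro rfl; exact h0
  obtain ⟨g₀, hg₀B, hg₀ne⟩ := hex
  set g : C(K, ℝ) := |g₀| with hgdef
  have hgB : g ∈ dComp S := by
    intro y hy
    have := hg₀B y hy
    unfold disjt at this ⊢
    rwa [hgdef, abs_abs]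
  obtain ⟨t₀, ht₀⟩ : ∃ t, g₀ t ≠ 0 := by
    by_contra h
    push_neg at h
    exact hg₀ne (ContinuousMap.ext fun t => h t)
  have hgt₀ : g t₀ = |g₀ t₀| := by
    simp [hgdef]
  set a : ℝ := |g₀ t₀| with hadef
  have ha : 0 < a := abs_pos.mpr ht₀
  set ε : ℝ := a / 3 with hεdef
  have hε : 0 < ε := by positivity
  obtain ⟨g', hg'dist, hg'ec⟩ := Metric.dense_iff.mp hdense g ε hε
  rw [Metric.mem_ball] at hg'dist
  have hg'ec : EssConst g' := hg'ec
  have hpt : ∀ t : K, |g' t - g t| < ε := fun t => by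
    calc |g' t - g t| = dist (g' t) (g t) := (Real.dist_eq _ _).symm
      _ ≤ dist g' g := ContinuousMap.dist_apply_le_dist t
      _ < ε := hg'dist
  set f : C(K, ℝ) := (g' - ContinuousMap.const K ε) ⊔ 0 with hfdef
  have hfapp : ∀ t : K, f t = max (g' t - ε) 0 := fun t => by
    simp [hfdef]
  have hfnn : ∀ t : K, 0 ≤ f t := fun t => by rw [hfapp]; exact le_max_right _ _
  have hgnn : ∀ t : K, 0 ≤ g t := fun t => by simp [hgdef]
  have hfle : ∀ t : K, f t ≤ g t := fun t => by
    rw [hfapp]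
    refine max_le ?_ (hgnn t)
    have := hpt t
    have h1 : g' t - g t < ε := lt_of_le_of_lt (le_abs_self _) this
    linarith
  refine ⟨f, ?_, ?_, ?_⟩
  · intro y hy
    have hgy := hgB y hy
    unfold disjt at hgy ⊢
    ext t
    have hgyt : min (g t) (|y t|) = 0 := by
      have := congrArg (fun h : C(K, ℝ) => h t) hgy
      simpa [hgdef, abs_abs] using this
    have habs : |f| = f := abs_of_nonneg (by
      intro t; exact hfnn t)
    rw [habs]
    simp only [ContinuousMap.inf_apply, ContinuousMap.abs_apply,
      ContinuousMap.zero_apply]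
    have h1 : min (f t) (|y t|) ≤ min (g t) (|y t|) := min_le_min (hfle t) le_rfl
    have h2 : 0 ≤ min (f t) (|y t|) := le_min (hfnn t) (abs_nonneg _)
    have : min (f t) (|y t|) = min (f t) (|y t|) := rfl
    show min (f t) (|y t|) = 0
    linarith [hgyt]
  · intro hf0
    have hft₀ : f t₀ = 0 := by rw [hf0]; rfl
    rw [hfapp] at hft₀
    have h1 : |g' t₀ - g t₀| < ε := hpt t₀
    have h2 : g t₀ = a := hgt₀
    have h3 : g' t₀ - g t₀ > -ε := by
      have := abs_lt.mp h1; linarith [this.1]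
    have : g' t₀ - ε > 0 := by
      rw [hεdef] at *; linarith
    have : max (g' t₀ - ε) 0 > 0 := lt_max_of_lt_left this
    linarith [hft₀ ▸ this]
  · intro G hG hGne
    obtain ⟨G₁, hsub, hopen, hne, c, hc⟩ := hg'ec G hG hGne
    refine ⟨G₁, hsub, hopen, hne, max (c - ε) 0, fun t ht => ?_⟩
    rw [hfapp, hc t ht]
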